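/- Let u > 0 and u ≠ 1 be real. Define d0 : ℝ^5 → ℝ^4 by the matrix [[−1/2,0,0,0,0],[1/2,0,0,0,−u/2],[1/2,0,0,0,−1/(2u)],[0,0,0,0,−1/2]] and d1 : ℝ^4 → ℝ by [(1+u^2)/(6u), 1/(6u), u/6, −1/3]. Then d1 ∘ d0 = 0, dim ker d0 = 3, dim ker d1 / im d0 = 1, and d1 is surjective. -/

import Mathlib

set_option synthInstance.maxHeartbeats 1000000 in
theorem stmt8 (u : ℝ) (hu : 0 < u) (hu1 : u ≠ 1) :
    let d0 : (Fin 5 → ℝ) →ₗ[ℝ] (Fin 4 → ℝ) :=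
      Matrix.mulVecLin
        (!![-1/2,0,0,0,0; 1/2,0,0,0,-u/2; 1/2,0,0,0,-1/(2*u); 0,0,0,0,-1/2])
    let d1 : (Fin 4 → ℝ) →ₗ[ℝ] (Fin 1 → ℝ) :=
      Matrix.mulVecLin (!![(1+u^2)/(6*u), 1/(6*u), u/6, -1/3])
    d1 ∘ₗ d0 = 0 ∧
    Module.finrank ℝ (LinearMap.ker d0) = 3 ∧
    Module.finrank ℝ
      (↥(LinearMap.ker d1) ⧸
        (LinearMap.range d0).comap (LinearMap.ker d1).subtype) = 1 ∧
    Function.Surjective d1 := by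
  intro d0 d1
  have hu0 : u ≠ 0 := ne_of_gt hu
  -- composition is zero
  have hcomp : d1 ∘ₗ d0 = 0 := by
    show (Matrix.mulVecLin _) ∘ₗ (Matrix.mulVecLin _) = 0
    rw [← Matrix.mulVecLin_mul]
    have : (!![(1+u^2)/(6*u), 1/(6*u), u/6, -1/3] *
        !![-1/2,0,0,0,0; 1/2,0,0,0,-u/2; 1/2,0,0,0,-1/(2*u); 0,0,0,0,-1/2]) = 0 := by
      ext i j
      fin_cases i <;> fin_cases j <;>
        simp [Matrix.mul_apply, Fin.sum_univ_succ] <;> field_simp <;> ring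
    rw [this, Matrix.mulVecLin_zero]
  -- surjectivity of d1
  have hsurj : Function.Surjective d1 := by
    intro y
    refine ⟨![0, 0, 0, -3 * y 0], ?_⟩
    funext i
    fin_cases i
    show (Matrix.mulVecLin _) _ 0 = y 0
    simp [Matrix.mulVecLin, Matrix.mulVec, dotProduct, Fin.sum_univ_succ]
    ring
  -- rank of d0
  set v0 : Fin 4 → ℝ := ![-1/2, 1/2, 1/2, 0] with hv0
  set v4 : Fin 4 → ℝ := ![0, -u/2, -1/(2*u), -1/2] with hv4
  have hrange : LinearMap.range d0 = Submodule.span ℝ {v0, v4} := by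
    apply le_antisymm
    · show LinearMap.range (Matrix.mulVecLin _) ≤ _
      rw [Matrix.range_mulVecLin]
      apply Submodule.span_le.2
      rintro x ⟨i, rfl⟩
      fin_cases i
      · apply Submodule.subset_span; left
        funext j; fin_cases j <;> simp [Matrix.transpose_apply, v0]
      · convert (show (0 : Fin 4 → ℝ) ∈ (Submodule.span ℝ {v0, v4} : Set (Fin 4 → ℝ)) from (Submodule.span ℝ {v0, v4}).zero_mem)
        funext j; fin_cases j <;> simp [Matrix.transpose_apply, Matrix.vecHead, Matrix.vecTail]
      · convert (show (0 : Fin 4 → ℝ) ∈ (Submodule.span ℝ {v0, v4} : Set (Fin 4 → ℝ)) from (Submodule.span ℝ {v0, v4}).zero_mem)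
        funext j; fin_cases j <;> simp [Matrix.transpose_apply, Matrix.vecHead, Matrix.vecTail]
      · convert (show (0 : Fin 4 → ℝ) ∈ (Submodule.span ℝ {v0, v4} : Set (Fin 4 → ℝ)) from (Submodule.span ℝ {v0, v4}).zero_mem)
        funext j; fin_cases j <;> simp [Matrix.transpose_apply, Matrix.vecHead, Matrix.vecTail]
      · apply Submodule.subset_span; right
        funext j; fin_cases j <;> simp [Matrix.transpose_apply, v4]
    · rw [Submodule.span_le]
      rintro x (rfl | rfl)
      · refine ⟨![1,0,0,0,0], ?_⟩
        funext j; fin_cases j <;>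
          simp [d0, Matrix.mulVecLin, Matrix.mulVec, dotProduct,
            Fin.sum_univ_succ, v0]
      · refine ⟨![0,0,0,0,1], ?_⟩
        funext j; fin_cases j <;>
          simp [d0, Matrix.mulVecLin, Matrix.mulVec, dotProduct,
            Fin.sum_univ_succ, v4]
  have hli : LinearIndependent ℝ ![v0, v4] := by
    rw [LinearIndependent.pair_iff]
    intro s t h
    have h0 := congrFun h 0
    have h3 := congrFun h 3
    simp [v0, v4] at h0 h3
    constructor <;> linarith
  have hspanrank : Module.finrank ℝ (Submodule.span ℝ {v0, v4}) = 2 := by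
    have := finrank_span_eq_card (R := ℝ) hli
    rw [show Set.range ![v0, v4] = {v0, v4} by
      ext x; simp [Matrix.range_cons, Matrix.range_empty]; tauto
      ] at this
    simpa using this
  have hrk0 : Module.finrank ℝ (LinearMap.range d0) = 2 := by rw [hrange]; exact hspanrank
  have hker0 : Module.finrank ℝ (LinearMap.ker d0) = 3 := by
    have := LinearMap.finrank_range_add_finrank_ker d0
    rw [hrk0] at this
    have h5 : Module.finrank ℝ (Fin 5 → ℝ) = 5 := by simp
    omega
  -- ker d1
  have hrk1 : Module.finrank ℝ (LinearMap.range d1) = 1 := by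
    rw [LinearMap.range_eq_top.2 hsurj]
    simp
  have hker1 : Module.finrank ℝ (LinearMap.ker d1) = 3 := by
    have := LinearMap.finrank_range_add_finrank_ker d1
    rw [hrk1] at this
    have h4 : Module.finrank ℝ (Fin 4 → ℝ) = 4 := by simp
    omega
  -- comap
  have hle : LinearMap.range d0 ≤ LinearMap.ker d1 := LinearMap.range_le_ker_iff.2 hcomp
  have hcomap : Module.finrank ℝ
      ((LinearMap.range d0).comap (LinearMap.ker d1).subtype) = 2 := by
    rw [(Submodule.comapSubtypeEquivOfLe hle).finrank_eq]
    exact hrk0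
  have hq := Submodule.finrank_quotient_add_finrank
    ((LinearMap.range d0).comap (LinearMap.ker d1).subtype)
  rw [hcomap, hker1] at hq
  exact ⟨hcomp, hker0, by omega, hsurj⟩
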